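/- (Jensen–Nenciu inversion lemma) Let A be a closed operator on a Hilbert space H and S a bounded projection on H. Suppose A + S has a bounded inverse. Then A has a bounded inverse if and only if B := S − S(A+S)⁻¹S has a bounded inverse on SH, and in that case A⁻¹ = (A+S)⁻¹ + (A+S)⁻¹ S B⁻¹ S (A+S)⁻¹. -/

import Mathlib

open ContinuousLinearMap

/-- `R` is a bounded two-sided inverse of the (possibly unbounded, partially defined)
operator `T`. -/
def IsBoundedInverse {H : Type*} [NormedAddCommGroup H] [InnerProductSpace ℂ H]
    (T : H →ₗ.[ℂ] H) (R : H →L[ℂ] H) : Prop :=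
  (∀ x : T.domain, R (T x) = (x : H)) ∧ ∀ y : H, ∃ h : R y ∈ T.domain, T ⟨R y, h⟩ = y

/-- Jensen–Nenciu inversion lemma: let `A` be a densely defined closed operator on a Hilbert
space `H` and `S` a bounded projection, and suppose `A + S` has a bounded inverse `R`.
Then `A` has a bounded inverse iff `B := S − S(A+S)⁻¹S` has a bounded inverse on `SH`,
in which case `A⁻¹ = (A+S)⁻¹ + (A+S)⁻¹ S B⁻¹ S (A+S)⁻¹`. -/
theorem stmt_5 {H : Type*} [NormedAddCommGroup H] [InnerProductSpace ℂ H] [CompleteSpace H]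
    (A : H →ₗ.[ℂ] H) (hAdense : Dense (A.domain : Set H)) (hAclosed : A.IsClosed)
    (S : H →L[ℂ] H) (hS : S ∘L S = S)
    (R : H →L[ℂ] H)
    (hR : IsBoundedInverse (A + (S : H →ₗ[ℂ] H).toPMap ⊤) R) :
    letI B : H →L[ℂ] H := S - S ∘L R ∘L S
    ((∃ A' : H →L[ℂ] H, IsBoundedInverse A A') ↔
      ∃ B' : H →L[ℂ] H, B' ∘L S = B' ∧ S ∘L B' = B' ∧
        (∀ x : H, B' (B (S x)) = S x) ∧ (∀ x : H, B (B' (S x)) = S x)) ∧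
    (∀ B' : H →L[ℂ] H, (B' ∘L S = B' ∧ S ∘L B' = B' ∧
        (∀ x : H, B' (B (S x)) = S x) ∧ (∀ x : H, B (B' (S x)) = S x)) →
      IsBoundedInverse A (R + R ∘L S ∘L B' ∘L S ∘L R)) := by
  obtain ⟨hR1, hR2⟩ := hR
  have hSS : ∀ v : H, S (S v) = S v := fun v => congrFun (congrArg DFunLike.coe hS) v
  have hmemT : ∀ x : H, x ∈ A.domain →
      x ∈ (A + (S : H →ₗ[ℂ] H).toPMap ⊤).domain := fun x hx => ⟨hx, trivial⟩
  have hTapp : ∀ (x : H) (hx : x ∈ A.domain),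
      (A + (S : H →ₗ[ℂ] H).toPMap ⊤) ⟨x, hmemT x hx⟩ = A ⟨x, hx⟩ + S x := fun _ _ => rfl
  have hR1' : ∀ (x : H) (hx : x ∈ A.domain), R (A ⟨x, hx⟩ + S x) = x := by
    intro x hx
    have := hR1 ⟨x, hmemT x hx⟩
    rwa [hTapp] at this
  have hRdom : ∀ y : H, R y ∈ A.domain := fun y => (hR2 y).choose.1
  have hAR : ∀ y : H, A ⟨R y, hRdom y⟩ = y - S (R y) := by
    intro y
    obtain ⟨h, heq⟩ := hR2 y
    have heq' : A ⟨R y, hRdom y⟩ + S (R y) = y := heq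
    exact eq_sub_of_add_eq heq'
  -- the key second part, proved first
  have hmain : ∀ B' : H →L[ℂ] H, (B' ∘L S = B' ∧ S ∘L B' = B' ∧
      (∀ x : H, B' ((S - S ∘L R ∘L S) (S x)) = S x) ∧
      (∀ x : H, (S - S ∘L R ∘L S) (B' (S x)) = S x)) →
      IsBoundedInverse A (R + R ∘L S ∘L B' ∘L S ∘L R) := by
    rintro B' ⟨hB'S, hSB', hB'B, hBB'⟩
    have hSB'' : ∀ z : H, S (B' z) = B' z :=
      fun z => congrFun (congrArg DFunLike.coe hSB') z
    constructor
    · rintro ⟨x, hx⟩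
      have hRa : R (A ⟨x, hx⟩) = x - R (S x) := by
        have h := hR1' x hx
        rw [map_add] at h
        exact eq_sub_of_add_eq h
      have hBS : (S - S ∘L R ∘L S) (S x) = S x - S (R (S x)) := by
        simp [hSS]
      have hB' : B' (S x - S (R (S x))) = S x := by
        have := hB'B x; rwa [hBS] at this
      have hSRa : S (R (A ⟨x, hx⟩)) = S x - S (R (S x)) := by
        rw [hRa, map_sub]
      simp only [ContinuousLinearMap.add_apply, comp_apply]
      rw [hSRa, hB', hSS, hRa]
      abel
    · intro y
      set w := B' (S (R y)) with hw
      have hSw : S w = w := hSB'' _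
      have hval : (R + R ∘L S ∘L B' ∘L S ∘L R) y = R y + R w := by
        simp only [ContinuousLinearMap.add_apply, comp_apply, ← hw, hSw]
      rw [hval]
      refine ⟨A.domain.add_mem (hRdom y) (hRdom w), ?_⟩
      have hsplit : (⟨R y + R w, A.domain.add_mem (hRdom y) (hRdom w)⟩ : A.domain)
          = ⟨R y, hRdom y⟩ + ⟨R w, hRdom w⟩ := rfl
      rw [hsplit, A.map_add, hAR, hAR]
      have hkey : w - S (R w) = S (R y) := by
        have h := hBB' (R y)
        simpa only [← hw, ContinuousLinearMap.sub_apply, comp_apply, hSw] using h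
      rw [sub_add_sub_comm, ← hkey]
      abel
  refine ⟨⟨?_, fun ⟨B', hB'⟩ => ⟨_, hmain B' hB'⟩⟩, hmain⟩
  rintro ⟨A', hA'1, hA'2⟩
  refine ⟨S + S ∘L A' ∘L S, ?_, ?_, ?_, ?_⟩
  · ext v; simp [hSS]
  · ext v; simp [hSS]
  · intro x
    have hBS : (S - S ∘L R ∘L S) (S x) = S x - S (R (S x)) := by simp [hSS]
    have h1 : A ⟨R (S x), hRdom _⟩ = S x - S (R (S x)) := hAR (S x)
    have h2 : A' (S x - S (R (S x))) = R (S x) := by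
      rw [← h1]; exact hA'1 ⟨R (S x), hRdom _⟩
    have h3 : S (S x - S (R (S x))) = S x - S (R (S x)) := by
      rw [map_sub, hSS, hSS]
    simp only [hBS, ContinuousLinearMap.add_apply, comp_apply, h3, h2]
    abel
  · intro x
    obtain ⟨hu, hAu⟩ := hA'2 (S x)
    set u := A' (S x) with hudef
    have hAu' : A ⟨u, hu⟩ = S x := hAu
    have hRu : R (S x) + R (S u) = u := by
      have h := hR1' u hu
      rw [hAu', map_add] at h
      exact h
    have hRSu : R (S u) = u - R (S x) := eq_sub_of_add_eq' hRu
    have hB'x : (S + S ∘L A' ∘L S) (S x) = S x + S u := by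
      simp only [ContinuousLinearMap.add_apply, comp_apply, hSS]
      rfl
    rw [hB'x]
    simp only [ContinuousLinearMap.sub_apply, comp_apply, map_add, hSS, hRSu, map_sub]
    abel
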